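/- Let G' be the Type C Whitney flip of a simple graph G along (H, v0, v1, v2, e). Then G' is bipartite if and only if G is bipartite. -/

import Mathlib

open SimpleGraph

/-- The vertex map of the Type C Whitney flip: `v0 ↦ v2`, `v1 ↦ v0`, all other vertices
fixed. -/
def rhoC {V : Type*} [DecidableEq V] (v0 v1 v2 : V) (x : V) : V :=
  if x = v0 then v2 else if x = v1 then v0 else x

lemma rhoC_injOn {V : Type*} [DecidableEq V] {v0 v1 v2 : V} {H : Set V}
    (h02 : v0 ≠ v2) (hv2 : v2 ∉ H) : Set.InjOn (rhoC v0 v1 v2) H := by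
  intro x hx y hy hxy
  unfold rhoC at hxy
  split_ifs at hxy <;> simp_all

/-- The Type C Whitney flip of `G` along `(H, v0, v1, v2, e)` where `e = s(v0, v2)`:
its edges are the edge `{v0, v1}`, the images under `rhoC v0 v1 v2` of the edges of
`G - e` with both endpoints in `H`, and the edges of `G - e` not having both endpoints
in `H`. -/
def typeCFlip {V : Type*} [DecidableEq V] (G : SimpleGraph V) (v0 v1 v2 : V) (H : Set V)
    (h01 : v0 ≠ v1) (h02 : v0 ≠ v2) (hv2 : v2 ∉ H) : SimpleGraph V where
  Adj a b :=
    s(a, b) = s(v0, v1) ∨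
    (∃ x y : V, x ∈ H ∧ y ∈ H ∧ (G.deleteEdges {s(v0, v2)}).Adj x y ∧
      a = rhoC v0 v1 v2 x ∧ b = rhoC v0 v1 v2 y) ∨
    (¬(a ∈ H ∧ b ∈ H) ∧ (G.deleteEdges {s(v0, v2)}).Adj a b)
  symm := by
    constructor
    rintro a b (he | ⟨x, y, hx, hy, h, ha, hb⟩ | ⟨hn, h⟩)
    · exact Or.inl (Sym2.eq_swap.trans he)
    · exact Or.inr (Or.inl ⟨y, x, hy, hx, h.symm, hb, ha⟩)
    · exact Or.inr (Or.inr ⟨fun ⟨hb', ha'⟩ => hn ⟨ha', hb'⟩, h.symm⟩)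
  loopless := by
    constructor
    rintro a (he | ⟨x, y, hx, hy, h, ha, hb⟩ | ⟨_, h⟩)
    · rw [Sym2.eq_iff] at he
      rcases he with ⟨h1, h2⟩ | ⟨h1, h2⟩ <;> exact h01 (h1 ▸ h2 ▸ rfl)
    · exact h.ne (rhoC_injOn h02 hv2 hx hy (ha ▸ hb))
    · exact h.ne rfl

section Aux

variable {V : Type*} [DecidableEq V]

lemma rhoC_v0 (v0 v1 v2 : V) : rhoC v0 v1 v2 v0 = v2 := by simp [rhoC]

lemma rhoC_v1 {v0 v1 v2 : V} (h : v1 ≠ v0) : rhoC v0 v1 v2 v1 = v0 := by simp [rhoC, h]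

lemma rhoC_other {v0 v1 v2 x : V} (h0 : x ≠ v0) (h1 : x ≠ v1) : rhoC v0 v1 v2 x = x := by
  simp [rhoC, h0, h1]

lemma typeCFlip_adj {G : SimpleGraph V} {v0 v1 v2 : V} {H : Set V}
    {h01 : v0 ≠ v1} {h02 : v0 ≠ v2} {hv2 : v2 ∉ H} {a b : V} :
    (typeCFlip G v0 v1 v2 H h01 h02 hv2).Adj a b ↔
      (s(a, b) = s(v0, v1) ∨
      (∃ x y : V, x ∈ H ∧ y ∈ H ∧ (G.deleteEdges {s(v0, v2)}).Adj x y ∧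
        a = rhoC v0 v1 v2 x ∧ b = rhoC v0 v1 v2 y) ∨
      (¬(a ∈ H ∧ b ∈ H) ∧ (G.deleteEdges {s(v0, v2)}).Adj a b)) := Iff.rfl

lemma zmod2_eq_add_one : ∀ a b : ZMod 2, a ≠ b → a = b + 1 := by decide

lemma zmod2_add_one_ne : ∀ a : ZMod 2, a + 1 ≠ a := by decide

lemma zmod2_add_one_ne_add_one : ∀ a b : ZMod 2, a ≠ b → a + 1 ≠ b + 1 := by decide

end Aux

/-- the Type C Whitney flip of a simple graph is bipartite (2-colorable) if
and only if the original graph is bipartite. -/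
theorem typeCFlip_bipartite_iff {V : Type*} [DecidableEq V] (G : SimpleGraph V)
    (v0 v1 v2 : V) (h01 : v0 ≠ v1) (h02 : v0 ≠ v2) (h12 : v1 ≠ v2)
    (he : G.Adj v0 v2) (H : Set V) (h0 : v0 ∈ H) (h1 : v1 ∈ H) (hv2 : v2 ∉ H)
    (hHconn : ((G.deleteEdges {s(v0, v2)}).induce H).Connected)
    (hHedge : ∀ x y : V, (G.deleteEdges {s(v0, v2)}).Adj x y →
      x ∈ H \ ({v1} : Set V) → y ∈ H) :
    (typeCFlip G v0 v1 v2 H h01 h02 hv2).Colorable 2 ↔ G.Colorable 2 := by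
  classical
  set G' := typeCFlip G v0 v1 v2 H h01 h02 hv2 with hG'
  have hcard : (2 : ℕ) ≤ Fintype.card (ZMod 2) := by simp
  constructor
  · -- G' colorable → G colorable
    intro h
    have c' : G'.Coloring (ZMod 2) := h.toColoring hcard
    let f : V → ZMod 2 := fun x =>
      if x ∈ H then c' (rhoC v0 v1 v2 x) + 1 else c' x
    have hfH : ∀ x ∈ H, f x = c' (rhoC v0 v1 v2 x) + 1 := fun x hx => if_pos hx
    have hfO : ∀ x, x ∉ H → f x = c' x := fun x hx => if_neg hx
    have hvalid : ∀ {a b : V}, G.Adj a b → f a ≠ f b := by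
      intro a b hab
      by_cases hE : s(a, b) = s(v0, v2)
      · rcases Sym2.eq_iff.mp hE with ⟨rfl, rfl⟩ | ⟨rfl, rfl⟩
        · rw [hfH _ h0, hfO _ hv2, rhoC_v0]
          exact zmod2_add_one_ne _
        · rw [hfH _ h0, hfO _ hv2, rhoC_v0]
          exact (zmod2_add_one_ne _).symm
      · have hde : (G.deleteEdges {s(v0, v2)}).Adj a b := by
          rw [deleteEdges_adj]
          exact ⟨hab, by simpa using hE⟩
        have hne01 : c' v0 ≠ c' v1 := c'.valid (Or.inl rfl)
        by_cases haH : a ∈ H <;> by_cases hbH : b ∈ H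
        · have hadj : G'.Adj (rhoC v0 v1 v2 a) (rhoC v0 v1 v2 b) :=
            Or.inr (Or.inl ⟨a, b, haH, hbH, hde, rfl, rfl⟩)
          rw [hfH _ haH, hfH _ hbH]
          exact zmod2_add_one_ne_add_one _ _ (c'.valid hadj)
        · have hav1 : a = v1 := by
            by_contra hne
            exact hbH (hHedge a b hde ⟨haH, hne⟩)
          have hadj : G'.Adj a b := Or.inr (Or.inr ⟨fun hh => hbH hh.2, hde⟩)
          rw [hfH _ haH, hfO _ hbH, hav1, rhoC_v1 h01.symm,
            ← zmod2_eq_add_one _ _ hne01.symm]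
          exact hav1 ▸ c'.valid hadj
        · have hbv1 : b = v1 := by
            by_contra hne
            exact haH (hHedge b a hde.symm ⟨hbH, hne⟩)
          have hadj : G'.Adj a b := Or.inr (Or.inr ⟨fun hh => haH hh.1, hde⟩)
          rw [hfO _ haH, hfH _ hbH, hbv1, rhoC_v1 h01.symm,
            ← zmod2_eq_add_one _ _ hne01.symm]
          exact hbv1 ▸ c'.valid hadj
        · have hadj : G'.Adj a b := Or.inr (Or.inr ⟨fun hh => haH hh.1, hde⟩)
          rw [hfO _ haH, hfO _ hbH]
          exact c'.valid hadj
    have C : G.Coloring (ZMod 2) := Coloring.mk f hvalid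
    simpa using C.colorable
  · -- G colorable → G' colorable
    intro h
    have c : G.Coloring (ZMod 2) := h.toColoring hcard
    have hc02 : c v2 = c v0 + 1 := zmod2_eq_add_one _ _ (c.valid he).symm
    let g : V → ZMod 2 := fun y =>
      if y = v2 then c v0 + 1 else if y = v0 then c v1 + 1 else
        if y = v1 then c v1 else if y ∈ H then c y + 1 else c y
    have hgout : ∀ y, y ∉ H → g y = c y := by
      intro y hy
      by_cases h2 : y = v2
      · subst h2
        simp only [g]
        rw [if_pos trivial, hc02]
      · have hy0 : y ≠ v0 := fun hh => hy (hh ▸ h0)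
        have hy1 : y ≠ v1 := fun hh => hy (hh ▸ h1)
        simp only [g]
        rw [if_neg h2, if_neg hy0, if_neg hy1, if_neg hy]
    have hgrho : ∀ x ∈ H, g (rhoC v0 v1 v2 x) = c x + 1 := by
      intro x hx
      by_cases hx0 : x = v0
      · subst hx0
        rw [rhoC_v0]
        simp only [g]
        rw [if_pos trivial]
      · by_cases hx1 : x = v1
        · subst hx1
          rw [rhoC_v1 h01.symm]
          simp only [g]
          rw [if_neg h02, if_pos trivial]
        · rw [rhoC_other hx0 hx1]
          have hx2 : x ≠ v2 := fun hh => hv2 (hh ▸ hx)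
          simp only [g]
          rw [if_neg hx2, if_neg hx0, if_neg hx1, if_pos hx]
    have hgv1 : g v1 = c v1 := by
      simp only [g]
      rw [if_neg h12, if_neg (Ne.symm h01), if_pos trivial]
    have hvalid : ∀ {a b : V}, G'.Adj a b → g a ≠ g b := by
      intro a b hab
      rcases typeCFlip_adj.mp hab with he' | ⟨x, y, hx, hy, hxy, rfl, rfl⟩ | ⟨hn, hde⟩
      · have hg0 : g v0 = c v1 + 1 := by
          simp only [g]
          rw [if_neg h02, if_pos trivial]
        rcases Sym2.eq_iff.mp he' with ⟨rfl, rfl⟩ | ⟨rfl, rfl⟩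
        · rw [hg0, hgv1]; exact zmod2_add_one_ne _
        · rw [hg0, hgv1]; exact (zmod2_add_one_ne _).symm
      · rw [hgrho _ hx, hgrho _ hy]
        exact zmod2_add_one_ne_add_one _ _ (c.valid ((deleteEdges_adj).mp hxy).1)
      · have hGab : G.Adj a b := ((deleteEdges_adj).mp hde).1
        by_cases haH : a ∈ H <;> by_cases hbH : b ∈ H
        · exact absurd ⟨haH, hbH⟩ hn
        · have hav1 : a = v1 := by
            by_contra hne
            exact hbH (hHedge a b hde ⟨haH, hne⟩)
          rw [hav1, hgv1, hgout _ hbH]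
          exact hav1 ▸ c.valid hGab
        · have hbv1 : b = v1 := by
            by_contra hne
            exact haH (hHedge b a hde.symm ⟨hbH, hne⟩)
          rw [hbv1, hgv1, hgout _ haH]
          exact hbv1 ▸ c.valid hGab
        · rw [hgout _ haH, hgout _ hbH]
          exact c.valid hGab
    have C : G'.Coloring (ZMod 2) := Coloring.mk g hvalid
    simpa using C.colorable
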